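/- Let γ ∈ (0,1), K a bounded γ-Hölder probability density on ℝ^d, F : ℝ → ℝ C¹ with F′ bounded and Lipschitz. Define φ(f) := f · F(K*f). Then there is a constant C depending on F and K such that for all bounded γ-Hölder f, g ∈ L¹(ℝ^d): ‖φ(f) − φ(g)‖_{C^γ} ≤ C (1 + ‖f‖_{C^γ} + ‖g‖_{C^γ}) (1 + ‖f+g‖_{L¹}) ‖f − g‖_{C^γ}. -/

import Mathlib

open MeasureTheory Real Filter

abbrev Euc (d : ℕ) := EuclideanSpace ℝ (Fin d)

noncomputable def supN {E : Type*} (f : E → ℝ) : ℝ := ⨆ x, |f x|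

noncomputable def holdS {E : Type*} [NormedAddCommGroup E] (γ : ℝ) (f : E → ℝ) : ℝ :=
  ⨆ p : E × E, |f p.1 - f p.2| / ‖p.1 - p.2‖ ^ γ

noncomputable def cNorm {E : Type*} [NormedAddCommGroup E] (γ : ℝ) (f : E → ℝ) : ℝ :=
  supN f + holdS γ f

def IsHolderBdd {E : Type*} [NormedAddCommGroup E] (γ : ℝ) (f : E → ℝ) : Prop :=
  BddAbove (Set.range fun x => |f x|) ∧
  BddAbove (Set.range fun p : E × E => |f p.1 - f p.2| / ‖p.1 - p.2‖ ^ γ)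

lemma supN_nonneg {E : Type*} (f : E → ℝ) : 0 ≤ supN f :=
  Real.iSup_nonneg fun x => abs_nonneg _

lemma holdS_nonneg {E : Type*} [NormedAddCommGroup E] (γ : ℝ) (f : E → ℝ) : 0 ≤ holdS γ f :=
  Real.iSup_nonneg fun p => div_nonneg (abs_nonneg _) (Real.rpow_nonneg (norm_nonneg _) _)

lemma cNorm_nonneg {E : Type*} [NormedAddCommGroup E] (γ : ℝ) (f : E → ℝ) : 0 ≤ cNorm γ f :=
  add_nonneg (supN_nonneg f) (holdS_nonneg γ f)

lemma abs_le_cNorm {E : Type*} [NormedAddCommGroup E] {γ : ℝ} {f : E → ℝ}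
    (hf : IsHolderBdd γ f) (x : E) : |f x| ≤ cNorm γ f := by
  have h1 : |f x| ≤ supN f := le_ciSup hf.1 x
  have := holdS_nonneg γ f
  unfold cNorm; linarith

lemma abs_sub_le_cNorm {E : Type*} [NormedAddCommGroup E] {γ : ℝ} (hγ : 0 < γ) {f : E → ℝ}
    (hf : IsHolderBdd γ f) (x y : E) : |f x - f y| ≤ cNorm γ f * ‖x - y‖ ^ γ := by
  have hh : |f x - f y| ≤ holdS γ f * ‖x - y‖ ^ γ := by
    rcases eq_or_ne x y with rfl | hxy
    · simp [Real.zero_rpow (ne_of_gt hγ)]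
    · have hpos : (0:ℝ) < ‖x - y‖ ^ γ :=
        Real.rpow_pos_of_pos (by simpa [sub_eq_zero] using hxy) _
      have h1 : |f x - f y| / ‖x - y‖ ^ γ ≤ holdS γ f := le_ciSup hf.2 (x, y)
      calc |f x - f y| = |f x - f y| / ‖x - y‖ ^ γ * ‖x - y‖ ^ γ := by
              field_simp
        _ ≤ holdS γ f * ‖x - y‖ ^ γ := by
              exact mul_le_mul_of_nonneg_right h1 hpos.le
  have hs := supN_nonneg f
  have hr : (0:ℝ) ≤ ‖x - y‖ ^ γ := Real.rpow_nonneg (norm_nonneg _) _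
  calc |f x - f y| ≤ holdS γ f * ‖x - y‖ ^ γ := hh
    _ ≤ cNorm γ f * ‖x - y‖ ^ γ := by
        apply mul_le_mul_of_nonneg_right _ hr
        unfold cNorm; linarith

lemma bddAbove_range_of_forall {E : Type*} {u : E → ℝ} {C : ℝ} (h : ∀ x, u x ≤ C) :
    BddAbove (Set.range u) := ⟨C, by rintro _ ⟨x, rfl⟩; exact h x⟩

/-- bound cNorm from pointwise bounds -/
lemma cNorm_le {E : Type*} [NormedAddCommGroup E] {γ : ℝ} {f : E → ℝ} {A B : ℝ}
    (hA : 0 ≤ A) (hB : 0 ≤ B) (h1 : ∀ x, |f x| ≤ A)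
    (h2 : ∀ x y, |f x - f y| ≤ B * ‖x - y‖ ^ γ) : cNorm γ f ≤ A + B := by
  have hs : supN f ≤ A := Real.iSup_le h1 hA
  have hh : holdS γ f ≤ B := by
    apply Real.iSup_le _ hB
    rintro ⟨x, y⟩
    rcases le_or_gt (‖x - y‖ ^ γ) 0 with hr | hr
    · have : ‖x - y‖ ^ γ = 0 :=
        le_antisymm hr (Real.rpow_nonneg (norm_nonneg _) _)
      simp [this, hB]
    · exact div_le_of_le_mul₀ hr.le hB (by simpa [mul_comm] using h2 x y)
  unfold cNorm; linarith


lemma abs_sub_le_holdS {E : Type*} [NormedAddCommGroup E] {γ : ℝ} (hγ : 0 < γ) {f : E → ℝ}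
    (hf : BddAbove (Set.range fun p : E × E => |f p.1 - f p.2| / ‖p.1 - p.2‖ ^ γ))
    (x y : E) : |f x - f y| ≤ holdS γ f * ‖x - y‖ ^ γ := by
  rcases eq_or_ne x y with rfl | hxy
  · simp [Real.zero_rpow (ne_of_gt hγ)]
  · have hpos : (0:ℝ) < ‖x - y‖ ^ γ :=
      Real.rpow_pos_of_pos (by simpa [sub_eq_zero] using hxy) _
    have h1 : |f x - f y| / ‖x - y‖ ^ γ ≤ holdS γ f := le_ciSup hf (x, y)
    calc |f x - f y| = |f x - f y| / ‖x - y‖ ^ γ * ‖x - y‖ ^ γ := by field_simp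
      _ ≤ holdS γ f * ‖x - y‖ ^ γ := mul_le_mul_of_nonneg_right h1 hpos.le

lemma quot_le {E : Type*} [NormedAddCommGroup E] {γ : ℝ} {f : E → ℝ} {C : ℝ} (hC : 0 ≤ C)
    (h : ∀ x y, |f x - f y| ≤ C * ‖x - y‖ ^ γ) (p : E × E) :
    |f p.1 - f p.2| / ‖p.1 - p.2‖ ^ γ ≤ C := by
  rcases le_or_gt (‖p.1 - p.2‖ ^ γ) 0 with hr | hr
  · have : ‖p.1 - p.2‖ ^ γ = 0 := le_antisymm hr (Real.rpow_nonneg (norm_nonneg _) _)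
    simp [this, hC]
  · exact div_le_of_le_mul₀ hr.le hC (by simpa [mul_comm] using h p.1 p.2)

section Fprop
variable {F : ℝ → ℝ} {M : ℝ} {L : NNReal}

lemma lip_of_deriv (hF : ContDiff ℝ 1 F) (hM : ∀ x, |deriv F x| ≤ M) (a b : ℝ) :
    |F a - F b| ≤ M * |a - b| := by
  have hd : ∀ x ∈ Set.univ, HasDerivWithinAt F (deriv F x) Set.univ x := fun x _ =>
    ((hF.differentiable one_ne_zero).differentiableAt.hasDerivAt).hasDerivWithinAt
  have := convex_univ.norm_image_sub_le_of_norm_hasDerivWithin_le hd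
    (fun x _ => by simpa [Real.norm_eq_abs] using hM x) (Set.mem_univ b) (Set.mem_univ a)
  simpa [Real.norm_eq_abs] using this

lemma abs_F_le (hF : ContDiff ℝ 1 F) (hM : ∀ x, |deriv F x| ≤ M) (a : ℝ) :
    |F a| ≤ |F 0| + M * |a| := by
  have := lip_of_deriv hF hM a 0
  have h2 : |F a| ≤ |F a - F 0| + |F 0| := by
    have := abs_sub_abs_le_abs_sub (F a) (F 0); linarith [abs_sub_le (F a) (F 0) 0]
  simp only [sub_zero] at this
  linarith

/-- Key second-difference estimate. -/
lemma second_diff (hF : ContDiff ℝ 1 F) (hM : ∀ x, |deriv F x| ≤ M)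
    (hL : LipschitzWith L (deriv F)) (p q p' q' : ℝ) :
    |F p - F q - (F p' - F q')| ≤
      M * |(p - q) - (p' - q')| + (L / 2) * |p' - q'| * |(p + q) - (p' + q')| := by
  have hdF : ∀ t, HasDerivAt F (deriv F t) t := fun t =>
    (hF.differentiable one_ne_zero).differentiableAt.hasDerivAt
  set a := p + q with ha
  set b := p - q with hb
  set c := p' + q' with hc
  set dd := p' - q' with hd
  -- h₁ w = F ((a+w)/2) - F ((a-w)/2), h₂ σ = F ((σ+dd)/2) - F ((σ-dd)/2)
  set h₁ : ℝ → ℝ := fun w => F ((a + w) / 2) - F ((a - w) / 2) with hh₁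
  set h₂ : ℝ → ℝ := fun σ => F ((σ + dd) / 2) - F ((σ - dd) / 2) with hh₂
  have key : F p - F q - (F p' - F q') = (h₁ b - h₁ dd) + (h₂ a - h₂ c) := by
    simp only [hh₁, hh₂]
    have e1 : (a + b) / 2 = p := by rw [ha, hb]; ring
    have e2 : (a - b) / 2 = q := by rw [ha, hb]; ring
    have e3 : (c + dd) / 2 = p' := by rw [hc, hd]; ring
    have e4 : (c - dd) / 2 = q' := by rw [hc, hd]; ring
    rw [e1, e2, e3, e4]; ring
  have hder₁ : ∀ w : ℝ, HasDerivAt h₁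
      (deriv F ((a + w) / 2) * (1 / 2) - deriv F ((a - w) / 2) * (-1 / 2)) w := by
    intro w
    have i1 : HasDerivAt (fun w : ℝ => (a + w) / 2) (1 / 2) w := by
      simpa using ((hasDerivAt_id w).const_add a).div_const 2
    have i2 : HasDerivAt (fun w : ℝ => (a - w) / 2) (-1 / 2) w := by
      have h0 : HasDerivAt (fun w : ℝ => a - w) (-1) w := by
        simpa using ((hasDerivAt_id w).const_sub a)
      simpa using h0.div_const 2
    exact ((hdF _).comp w i1).sub ((hdF _).comp w i2)
  have hder₂ : ∀ σ : ℝ, HasDerivAt h₂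
      (deriv F ((σ + dd) / 2) * (1 / 2) - deriv F ((σ - dd) / 2) * (1 / 2)) σ := by
    intro σ
    have i1 : HasDerivAt (fun σ : ℝ => (σ + dd) / 2) (1 / 2) σ := by
      simpa using ((hasDerivAt_id σ).add_const dd).div_const 2
    have i2 : HasDerivAt (fun σ : ℝ => (σ - dd) / 2) (1 / 2) σ := by
      simpa using ((hasDerivAt_id σ).sub_const dd).div_const 2
    exact ((hdF _).comp σ i1).sub ((hdF _).comp σ i2)
  have bound1 : |h₁ b - h₁ dd| ≤ M * |b - dd| := by
    have := convex_univ.norm_image_sub_le_of_norm_hasDerivWithin_le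
      (f := h₁) (f' := fun w => deriv F ((a + w) / 2) * (1 / 2) - deriv F ((a - w) / 2) * (-1 / 2))
      (fun w _ => (hder₁ w).hasDerivWithinAt)
      (fun w _ => by
        have m1 := hM ((a + w) / 2); have m2 := hM ((a - w) / 2)
        show ‖deriv F ((a + w) / 2) * (1 / 2) - deriv F ((a - w) / 2) * (-1 / 2)‖ ≤ M
        rw [Real.norm_eq_abs]
        have e : deriv F ((a + w) / 2) * (1 / 2) - deriv F ((a - w) / 2) * (-1 / 2)
            = (deriv F ((a + w) / 2) + deriv F ((a - w) / 2)) / 2 := by ring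
        rw [e]
        calc |(deriv F ((a + w) / 2) + deriv F ((a - w) / 2)) / 2|
            ≤ (|deriv F ((a + w) / 2)| + |deriv F ((a - w) / 2)|) / 2 := by
              rw [abs_div]; simp only [abs_two]
              exact div_le_div_of_nonneg_right (abs_add_le _ _) (by norm_num) |>.trans le_rfl
          _ ≤ M := by linarith)
      (Set.mem_univ dd) (Set.mem_univ b)
    simpa [Real.norm_eq_abs] using this
  have bound2 : |h₂ a - h₂ c| ≤ ((L : ℝ) / 2 * |dd|) * |a - c| := by
    have := convex_univ.norm_image_sub_le_of_norm_hasDerivWithin_le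
      (f := h₂) (f' := fun σ => deriv F ((σ + dd) / 2) * (1 / 2) - deriv F ((σ - dd) / 2) * (1 / 2))
      (fun σ _ => (hder₂ σ).hasDerivWithinAt)
      (fun σ _ => by
        show ‖deriv F ((σ + dd) / 2) * (1 / 2) - deriv F ((σ - dd) / 2) * (1 / 2)‖ ≤ (L : ℝ) / 2 * |dd|
        rw [Real.norm_eq_abs]
        have hlip : |deriv F ((σ + dd) / 2) - deriv F ((σ - dd) / 2)|
            ≤ (L : ℝ) * |(σ + dd) / 2 - (σ - dd) / 2| := by
          have := hL.dist_le_mul ((σ + dd) / 2) ((σ - dd) / 2)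
          simpa [Real.dist_eq] using this
        have e2 : (σ + dd) / 2 - (σ - dd) / 2 = dd := by ring
        rw [e2] at hlip
        have e : deriv F ((σ + dd) / 2) * (1 / 2) - deriv F ((σ - dd) / 2) * (1 / 2)
            = (deriv F ((σ + dd) / 2) - deriv F ((σ - dd) / 2)) / 2 := by ring
        rw [e, abs_div]
        simp only [abs_two]
        calc |deriv F ((σ + dd) / 2) - deriv F ((σ - dd) / 2)| / 2
            ≤ ((L : ℝ) * |dd|) / 2 := by linarith
          _ = (L : ℝ) / 2 * |dd| := by ring)
      (Set.mem_univ c) (Set.mem_univ a)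
    simpa [Real.norm_eq_abs] using this
  calc |F p - F q - (F p' - F q')| = |(h₁ b - h₁ dd) + (h₂ a - h₂ c)| := by rw [key]
    _ ≤ |h₁ b - h₁ dd| + |h₂ a - h₂ c| := abs_add_le _ _
    _ ≤ M * |b - dd| + ((L : ℝ) / 2 * |dd|) * |a - c| := add_le_add bound1 bound2
    _ = M * |(p - q) - (p' - q')| + ((L : ℝ) / 2) * |p' - q'| * |(p + q) - (p' + q')| := by
        rw [ha, hb, hc, hd]
        try ring

end Fprop

section Conv
variable {d : ℕ} {K h : Euc d → ℝ}

lemma conv_int (hKint : Integrable K) (hh : Integrable h) {C : ℝ} (hb : ∀ z, |h z| ≤ C)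
    (x : Euc d) : Integrable (fun z => K (x - z) * h z) := by
  have h1 : Integrable (fun z => K (x - z)) := hKint.comp_sub_left x
  have := h1.bdd_mul hh.aestronglyMeasurable (Filter.Eventually.of_forall fun z => by simpa [Real.norm_eq_abs] using hb z)
  simpa [mul_comm] using this

lemma conv_int' (hKint : Integrable K) (hh : Integrable h) {C : ℝ} (hb : ∀ z, |h z| ≤ C)
    (x : Euc d) : Integrable (fun z => K z * h (x - z)) := by
  have h1 : Integrable (fun z => h (x - z)) := hh.comp_sub_left x
  have := hKint.bdd_mul h1.aestronglyMeasurable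
    (Filter.Eventually.of_forall fun z => by simpa [Real.norm_eq_abs] using hb (x - z))
  simpa [mul_comm] using this

lemma conv_shift (x : Euc d) : (∫ z, K (x - z) * h z) = ∫ z, K z * h (x - z) := by
  have := integral_sub_left_eq_self (fun z => K z * h (x - z)) volume x
  simp only [sub_sub_cancel] at this
  exact this

lemma wabs (hK0 : ∀ z, 0 ≤ K z) (hKint : Integrable K) (hK1 : (∫ x, K x) = 1)
    {ψ : Euc d → ℝ} (hψ : Integrable (fun z => K z * ψ z)) {C : ℝ}
    (hb : ∀ z, |ψ z| ≤ C) : |∫ z, K z * ψ z| ≤ C := by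
  calc |∫ z, K z * ψ z| ≤ ∫ z, |K z| * |ψ z| := by
        simpa [Real.norm_eq_abs, abs_mul] using
          norm_integral_le_integral_norm (μ := volume) (fun z => K z * ψ z)
    _ ≤ ∫ z, K z * C := by
        apply integral_mono (by simpa [abs_mul] using hψ.abs) (hKint.mul_const C)
        intro z
        dsimp only
        rw [abs_of_nonneg (hK0 z)]
        exact mul_le_mul_of_nonneg_left (hb z) (hK0 z)
    _ = (∫ z, K z) * C := integral_mul_const C K
    _ = C := by rw [hK1, one_mul]

lemma conv_abs_le (hK0 : ∀ z, 0 ≤ K z) (hKint : Integrable K) (hK1 : (∫ x, K x) = 1)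
    (hh : Integrable h) {C : ℝ} (hb : ∀ z, |h z| ≤ C) (x : Euc d) :
    |∫ z, K (x - z) * h z| ≤ C := by
  rw [conv_shift x]
  exact wabs hK0 hKint hK1 (conv_int' hKint hh hb x) (fun z => hb (x - z))

lemma conv_diff_le (hK0 : ∀ z, 0 ≤ K z) (hKint : Integrable K) (hK1 : (∫ x, K x) = 1)
    (hhi : Integrable h) {Ca Cd : ℝ} (hba : ∀ z, |h z| ≤ Ca) (x y : Euc d)
    (hd : ∀ z, |h (x - z) - h (y - z)| ≤ Cd) :
    |(∫ z, K (x - z) * h z) - ∫ z, K (y - z) * h z| ≤ Cd := by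
  rw [conv_shift x, conv_shift y,
    ← integral_sub (conv_int' hKint hhi hba x) (conv_int' hKint hhi hba y)]
  simp only [← mul_sub]
  exact wabs hK0 hKint hK1
    (by simpa [mul_sub, Pi.sub_def] using ((conv_int' hKint hhi hba x).sub (conv_int' hKint hhi hba y))) hd

lemma kdiff_abs_le {s : Euc d → ℝ} (hKint : Integrable K) (hs : Integrable s)
    {Cs CKr : ℝ} (hbs : ∀ z, |s z| ≤ Cs) (x y : Euc d)
    (hd : ∀ z, |K (x - z) - K (y - z)| ≤ CKr) :
    |(∫ z, K (x - z) * s z) - ∫ z, K (y - z) * s z| ≤ CKr * ∫ z, |s z| := by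
  have i1 : Integrable (fun z => K (x - z) * s z) := conv_int hKint hs hbs x
  have i2 : Integrable (fun z => K (y - z) * s z) := conv_int hKint hs hbs y
  have iD : Integrable (fun z => (K (x - z) - K (y - z)) * s z) := by
    simpa [sub_mul, Pi.sub_def] using i1.sub i2
  have eq1 : (∫ z, K (x - z) * s z) - (∫ z, K (y - z) * s z)
      = ∫ z, (K (x - z) - K (y - z)) * s z := by
    rw [← integral_sub i1 i2]; simp [sub_mul]
  rw [eq1]
  calc |∫ z, (K (x - z) - K (y - z)) * s z| ≤ ∫ z, |K (x - z) - K (y - z)| * |s z| := by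
        simpa [Real.norm_eq_abs, abs_mul] using
          norm_integral_le_integral_norm (μ := volume) (fun z => (K (x - z) - K (y - z)) * s z)
    _ ≤ ∫ z, CKr * |s z| := by
        apply integral_mono (by simpa [abs_mul] using iD.abs) (hs.abs.const_mul CKr)
        intro z
        dsimp only
        exact mul_le_mul_of_nonneg_right (hd z) (abs_nonneg _)
    _ = CKr * ∫ z, |s z| := integral_const_mul CKr _

end Conv

/-- local Lipschitz property of φ(f) = f·F(K*f) in the
Hölder–Zygmund norm. -/
theorem stmt6 {d : ℕ} (γ : ℝ) (hγ : γ ∈ Set.Ioo (0:ℝ) 1)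
    (K : Euc d → ℝ) (hK0 : ∀ x, 0 ≤ K x) (hKint : Integrable K)
    (hK1 : (∫ x, K x) = 1) (hKH : IsHolderBdd γ K)
    (F : ℝ → ℝ) (hF : ContDiff ℝ 1 F) (M : ℝ) (hM : ∀ x, |deriv F x| ≤ M)
    (L : NNReal) (hL : LipschitzWith L (deriv F)) :
    ∃ C > 0, ∀ f g : Euc d → ℝ,
      IsHolderBdd γ f → IsHolderBdd γ g → Integrable f → Integrable g →
      cNorm γ (fun x => f x * F (∫ z, K (x - z) * f z)
                        - g x * F (∫ z, K (x - z) * g z)) ≤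
        C * (1 + cNorm γ f + cNorm γ g) * (1 + ∫ x, |f x + g x|) *
          cNorm γ (fun x => f x - g x) := by
  obtain ⟨hγ0, hγ1⟩ := hγ
  set A0 : ℝ := |F 0| with hA0def
  have hA00 : 0 ≤ A0 := abs_nonneg _
  have hM0 : 0 ≤ M := (abs_nonneg _).trans (hM 0)
  set CK : ℝ := holdS γ K with hCKdef
  have hCK0 : 0 ≤ CK := holdS_nonneg γ K
  have hL0 : 0 ≤ (L : ℝ) := L.coe_nonneg
  have hKd : ∀ x y : Euc d, |K x - K y| ≤ CK * ‖x - y‖ ^ γ :=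
    fun x y => abs_sub_le_holdS hγ0 hKH.2 x y
  refine ⟨2 * A0 + 3 * M + (L : ℝ) / 4 * CK + 1, by positivity, ?_⟩
  intro f g hf hg hfi hgi
  set cf : ℝ := cNorm γ f with hcf
  set cg : ℝ := cNorm γ g with hcg
  have hcf0 : 0 ≤ cf := cNorm_nonneg γ f
  have hcg0 : 0 ≤ cg := cNorm_nonneg γ g
  have hfa : ∀ x, |f x| ≤ cf := abs_le_cNorm hf
  have hga : ∀ x, |g x| ≤ cg := abs_le_cNorm hg
  have hfd : ∀ x y, |f x - f y| ≤ cf * ‖x - y‖ ^ γ := abs_sub_le_cNorm hγ0 hf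
  have hgd : ∀ x y, |g x - g y| ≤ cg * ‖x - y‖ ^ γ := abs_sub_le_cNorm hγ0 hg
  -- the difference q = f - g
  have hqb : ∀ x, |f x - g x| ≤ cf + cg := fun x =>
    (abs_sub _ _).trans (add_le_add (hfa x) (hga x))
  have hqd0 : ∀ x y, |(f x - g x) - (f y - g y)| ≤ (cf + cg) * ‖x - y‖ ^ γ := by
    intro x y
    have e : (f x - g x) - (f y - g y) = (f x - f y) - (g x - g y) := by ring
    rw [e]
    calc |(f x - f y) - (g x - g y)| ≤ |f x - f y| + |g x - g y| := abs_sub _ _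
      _ ≤ cf * ‖x - y‖ ^ γ + cg * ‖x - y‖ ^ γ := add_le_add (hfd x y) (hgd x y)
      _ = (cf + cg) * ‖x - y‖ ^ γ := by ring
  have hqH : IsHolderBdd γ (fun x => f x - g x) :=
    ⟨bddAbove_range_of_forall hqb,
     bddAbove_range_of_forall (quot_le (by linarith) hqd0)⟩
  set δ : ℝ := cNorm γ (fun x => f x - g x) with hδ
  have hδ0 : 0 ≤ δ := cNorm_nonneg γ _
  have hqa : ∀ x, |f x - g x| ≤ δ := fun x => abs_le_cNorm hqH x
  have hqd : ∀ x y, |(f x - g x) - (f y - g y)| ≤ δ * ‖x - y‖ ^ γ := fun x y =>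
    abs_sub_le_cNorm hγ0 hqH x y
  -- the sum s = f + g
  set I : ℝ := ∫ x, |f x + g x| with hI
  have hI0 : 0 ≤ I := integral_nonneg (fun x => abs_nonneg _)
  have hsa : ∀ x, |f x + g x| ≤ cf + cg := fun x =>
    (abs_add_le _ _).trans (add_le_add (hfa x) (hga x))
  -- integrability
  have hqi : Integrable (fun x => f x - g x) := hfi.sub hgi
  have hsi : Integrable (fun x => f x + g x) := hfi.add hgi
  have iUf : ∀ x, Integrable (fun z => K (x - z) * f z) := fun x => conv_int hKint hfi hfa x
  have iUg : ∀ x, Integrable (fun z => K (x - z) * g z) := fun x => conv_int hKint hgi hga x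
  -- convolution values
  have hua : ∀ x, |∫ z, K (x - z) * f z| ≤ cf := fun x => conv_abs_le hK0 hKint hK1 hfi hfa x
  have hva : ∀ x, |∫ z, K (x - z) * g z| ≤ cg := fun x => conv_abs_le hK0 hKint hK1 hgi hga x
  have hud : ∀ x y, |(∫ z, K (x - z) * f z) - ∫ z, K (y - z) * f z| ≤ cf * ‖x - y‖ ^ γ := by
    intro x y
    refine conv_diff_le hK0 hKint hK1 hfi hfa x y (fun z => ?_)
    have := hfd (x - z) (y - z)
    rwa [show x - z - (y - z) = x - y by abel] at this
  have hvd : ∀ x y, |(∫ z, K (x - z) * g z) - ∫ z, K (y - z) * g z| ≤ cg * ‖x - y‖ ^ γ := by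
    intro x y
    refine conv_diff_le hK0 hKint hK1 hgi hga x y (fun z => ?_)
    have := hgd (x - z) (y - z)
    rwa [show x - z - (y - z) = x - y by abel] at this
  -- w = K * (f - g)
  have hweq : ∀ x, (∫ z, K (x - z) * (f z - g z))
      = (∫ z, K (x - z) * f z) - ∫ z, K (x - z) * g z := by
    intro x
    have e : (fun z => K (x - z) * (f z - g z))
        = fun z => K (x - z) * f z - K (x - z) * g z := by funext z; ring
    rw [e, integral_sub (iUf x) (iUg x)]
  have hwa : ∀ x, |(∫ z, K (x - z) * f z) - ∫ z, K (x - z) * g z| ≤ δ := by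
    intro x
    rw [← hweq x]
    exact conv_abs_le hK0 hKint hK1 hqi hqa x
  have hwd : ∀ x y, |((∫ z, K (x - z) * f z) - ∫ z, K (x - z) * g z)
      - ((∫ z, K (y - z) * f z) - ∫ z, K (y - z) * g z)| ≤ δ * ‖x - y‖ ^ γ := by
    intro x y
    rw [← hweq x, ← hweq y]
    refine conv_diff_le hK0 hKint hK1 hqi hqa x y (fun z => ?_)
    have := hqd (x - z) (y - z)
    rwa [show x - z - (y - z) = x - y by abel] at this
  -- σ = K * (f + g)
  have hσeq : ∀ x, (∫ z, K (x - z) * (f z + g z))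
      = (∫ z, K (x - z) * f z) + ∫ z, K (x - z) * g z := by
    intro x
    have e : (fun z => K (x - z) * (f z + g z))
        = fun z => K (x - z) * f z + K (x - z) * g z := by funext z; ring
    rw [e, integral_add (iUf x) (iUg x)]
  have hσd : ∀ x y, |((∫ z, K (x - z) * f z) + ∫ z, K (x - z) * g z)
      - ((∫ z, K (y - z) * f z) + ∫ z, K (y - z) * g z)| ≤ CK * ‖x - y‖ ^ γ * I := by
    intro x y
    rw [← hσeq x, ← hσeq y]
    refine kdiff_abs_le hKint hsi hsa x y (fun z => ?_)
    have := hKd (x - z) (y - z)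
    rwa [show x - z - (y - z) = x - y by abel] at this
  -- pointwise sup bound
  have hsup : ∀ x, |f x * F (∫ z, K (x - z) * f z) - g x * F (∫ z, K (x - z) * g z)|
      ≤ (A0 + M * (cf + cg)) * δ := by
    intro x
    set Ux := ∫ z, K (x - z) * f z with hUx
    set Vx := ∫ z, K (x - z) * g z with hVx
    have h1 : |F Ux| ≤ A0 + M * cf := by
      have := abs_F_le hF hM Ux
      have h2 := mul_le_mul_of_nonneg_left (hua x) hM0
      rw [← hUx] at h2
      linarith
    have h2 : |F Vx| ≤ A0 + M * cg := by
      have := abs_F_le hF hM Vx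
      have h2 := mul_le_mul_of_nonneg_left (hva x) hM0
      rw [← hVx] at h2
      linarith
    have h3 : |F Ux - F Vx| ≤ M * δ := by
      refine (lip_of_deriv hF hM Ux Vx).trans ?_
      exact mul_le_mul_of_nonneg_left (hwa x) hM0
    have e : f x * F Ux - g x * F Vx
        = (f x - g x) * (F Ux + F Vx) / 2 + (f x + g x) * (F Ux - F Vx) / 2 := by ring
    rw [e]
    have t1 : |f x - g x| * |F Ux + F Vx| ≤ δ * ((A0 + M * cf) + (A0 + M * cg)) :=
      mul_le_mul (hqa x) ((abs_add_le _ _).trans (add_le_add h1 h2)) (abs_nonneg _) hδ0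
    have t2 : |f x + g x| * |F Ux - F Vx| ≤ (cf + cg) * (M * δ) :=
      mul_le_mul (hsa x) h3 (abs_nonneg _) (by linarith)
    calc |(f x - g x) * (F Ux + F Vx) / 2 + (f x + g x) * (F Ux - F Vx) / 2|
        ≤ |(f x - g x) * (F Ux + F Vx) / 2| + |(f x + g x) * (F Ux - F Vx) / 2| := abs_add_le _ _
      _ = |f x - g x| * |F Ux + F Vx| / 2 + |f x + g x| * |F Ux - F Vx| / 2 := by
          rw [abs_div, abs_div, abs_mul, abs_mul, abs_two]
      _ ≤ δ * ((A0 + M * cf) + (A0 + M * cg)) / 2 + (cf + cg) * (M * δ) / 2 := by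
          apply add_le_add
          · exact div_le_div_of_nonneg_right t1 (by norm_num) |>.trans le_rfl
          · exact div_le_div_of_nonneg_right t2 (by norm_num) |>.trans le_rfl
      _ = (A0 + M * (cf + cg)) * δ := by ring
  -- pointwise Hölder bound
  have hdiff : ∀ x y,
      |(f x * F (∫ z, K (x - z) * f z) - g x * F (∫ z, K (x - z) * g z))
        - (f y * F (∫ z, K (y - z) * f z) - g y * F (∫ z, K (y - z) * g z))|
      ≤ ((A0 + 2 * M * (cf + cg) + (L : ℝ) / 4 * CK * (cf + cg) * I) * δ) * ‖x - y‖ ^ γ := by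
    intro x y
    set r := ‖x - y‖ ^ γ with hrdef
    have hr0 : 0 ≤ r := Real.rpow_nonneg (norm_nonneg _) _
    set Ux := ∫ z, K (x - z) * f z with hUx
    set Vx := ∫ z, K (x - z) * g z with hVx
    set Uy := ∫ z, K (y - z) * f z with hUy
    set Vy := ∫ z, K (y - z) * g z with hVy
    have h1 : |F Ux| ≤ A0 + M * cf := by
      have := abs_F_le hF hM Ux
      have h2 := mul_le_mul_of_nonneg_left (hua x) hM0
      rw [← hUx] at h2; linarith
    have h2 : |F Vx| ≤ A0 + M * cg := by
      have := abs_F_le hF hM Vx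
      have h2 := mul_le_mul_of_nonneg_left (hva x) hM0
      rw [← hVx] at h2; linarith
    have h3 : |F Ux - F Vx| ≤ M * δ :=
      (lip_of_deriv hF hM Ux Vx).trans (mul_le_mul_of_nonneg_left (hwa x) hM0)
    have h4 : |F Ux - F Uy| ≤ M * (cf * r) :=
      (lip_of_deriv hF hM Ux Uy).trans (mul_le_mul_of_nonneg_left (hud x y) hM0)
    have h5 : |F Vx - F Vy| ≤ M * (cg * r) :=
      (lip_of_deriv hF hM Vx Vy).trans (mul_le_mul_of_nonneg_left (hvd x y) hM0)
    -- second difference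
    have h6 : |F Ux - F Vx - (F Uy - F Vy)|
        ≤ M * (δ * r) + (L : ℝ) / 2 * δ * (CK * r * I) := by
      refine (second_diff hF hM hL Ux Vx Uy Vy).trans ?_
      have w1 : |Ux - Vx - (Uy - Vy)| ≤ δ * r := hwd x y
      have w2 : |Uy - Vy| ≤ δ := hwa y
      have w3 : |Ux + Vx - (Uy + Vy)| ≤ CK * r * I := hσd x y
      have p1 : M * |Ux - Vx - (Uy - Vy)| ≤ M * (δ * r) :=
        mul_le_mul_of_nonneg_left w1 hM0
      have p2 : (L : ℝ) / 2 * |Uy - Vy| * |Ux + Vx - (Uy + Vy)|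
          ≤ (L : ℝ) / 2 * δ * (CK * r * I) := by
        apply mul_le_mul
        · exact mul_le_mul_of_nonneg_left w2 (by positivity)
        · exact w3
        · exact abs_nonneg _
        · positivity
      linarith
    have b1 : |(f x - g x) - (f y - g y)| ≤ δ * r := hqd x y
    have b3 : |f y - g y| ≤ δ := hqa y
    have b6 : |(f x + g x) - (f y + g y)| ≤ (cf + cg) * r := by
      have e6 : (f x + g x) - (f y + g y) = (f x - f y) + (g x - g y) := by ring
      rw [e6]
      calc |(f x - f y) + (g x - g y)| ≤ |f x - f y| + |g x - g y| := abs_add_le _ _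
        _ ≤ cf * r + cg * r := add_le_add (hfd x y) (hgd x y)
        _ = (cf + cg) * r := by ring
    have b8 : |f y + g y| ≤ cf + cg := hsa y
    -- decomposition
    have e : (f x * F Ux - g x * F Vx) - (f y * F Uy - g y * F Vy)
        = ((f x - g x) - (f y - g y)) * (F Ux + F Vx) / 2
          + (f y - g y) * ((F Ux - F Uy) + (F Vx - F Vy)) / 2
          + ((f x + g x) - (f y + g y)) * (F Ux - F Vx) / 2
          + (f y + g y) * (F Ux - F Vx - (F Uy - F Vy)) / 2 := by ring
    rw [e]
    have t1 : |((f x - g x) - (f y - g y)) * (F Ux + F Vx)|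
        ≤ (δ * r) * ((A0 + M * cf) + (A0 + M * cg)) := by
      rw [abs_mul]
      exact mul_le_mul b1 ((abs_add_le _ _).trans (add_le_add h1 h2)) (abs_nonneg _)
        (by positivity)
    have t2 : |(f y - g y) * ((F Ux - F Uy) + (F Vx - F Vy))|
        ≤ δ * (M * (cf * r) + M * (cg * r)) := by
      rw [abs_mul]
      exact mul_le_mul b3 ((abs_add_le _ _).trans (add_le_add h4 h5)) (abs_nonneg _) hδ0
    have t3 : |((f x + g x) - (f y + g y)) * (F Ux - F Vx)|
        ≤ ((cf + cg) * r) * (M * δ) := by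
      rw [abs_mul]
      exact mul_le_mul b6 h3 (abs_nonneg _) (by positivity)
    have t4 : |(f y + g y) * (F Ux - F Vx - (F Uy - F Vy))|
        ≤ (cf + cg) * (M * (δ * r) + (L : ℝ) / 2 * δ * (CK * r * I)) := by
      rw [abs_mul]
      exact mul_le_mul b8 h6 (abs_nonneg _) (by linarith)
    have t1' : |((f x - g x) - (f y - g y)) * (F Ux + F Vx)|
        ≤ (δ * r) * ((A0 + M * cf) + (A0 + M * cg)) := t1
    calc |((f x - g x) - (f y - g y)) * (F Ux + F Vx) / 2
          + (f y - g y) * ((F Ux - F Uy) + (F Vx - F Vy)) / 2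
          + ((f x + g x) - (f y + g y)) * (F Ux - F Vx) / 2
          + (f y + g y) * (F Ux - F Vx - (F Uy - F Vy)) / 2|
        ≤ |((f x - g x) - (f y - g y)) * (F Ux + F Vx) / 2
            + (f y - g y) * ((F Ux - F Uy) + (F Vx - F Vy)) / 2
            + ((f x + g x) - (f y + g y)) * (F Ux - F Vx) / 2|
          + |(f y + g y) * (F Ux - F Vx - (F Uy - F Vy)) / 2| := abs_add_le _ _
      _ ≤ |((f x - g x) - (f y - g y)) * (F Ux + F Vx) / 2
            + (f y - g y) * ((F Ux - F Uy) + (F Vx - F Vy)) / 2|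
          + |((f x + g x) - (f y + g y)) * (F Ux - F Vx) / 2|
          + |(f y + g y) * (F Ux - F Vx - (F Uy - F Vy)) / 2| := by
          have := abs_add_le (((f x - g x) - (f y - g y)) * (F Ux + F Vx) / 2
            + (f y - g y) * ((F Ux - F Uy) + (F Vx - F Vy)) / 2)
            (((f x + g x) - (f y + g y)) * (F Ux - F Vx) / 2)
          linarith
      _ ≤ |((f x - g x) - (f y - g y)) * (F Ux + F Vx) / 2|
          + |(f y - g y) * ((F Ux - F Uy) + (F Vx - F Vy)) / 2|
          + |((f x + g x) - (f y + g y)) * (F Ux - F Vx) / 2|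
          + |(f y + g y) * (F Ux - F Vx - (F Uy - F Vy)) / 2| := by
          have := abs_add_le (((f x - g x) - (f y - g y)) * (F Ux + F Vx) / 2)
            ((f y - g y) * ((F Ux - F Uy) + (F Vx - F Vy)) / 2)
          linarith
      _ ≤ (δ * r) * ((A0 + M * cf) + (A0 + M * cg)) / 2
          + δ * (M * (cf * r) + M * (cg * r)) / 2
          + ((cf + cg) * r) * (M * δ) / 2
          + (cf + cg) * (M * (δ * r) + (L : ℝ) / 2 * δ * (CK * r * I)) / 2 := by
          have a1 : |((f x - g x) - (f y - g y)) * (F Ux + F Vx) / 2|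
              = |((f x - g x) - (f y - g y)) * (F Ux + F Vx)| / 2 := by
            rw [abs_div, abs_two]
          have a2 : |(f y - g y) * ((F Ux - F Uy) + (F Vx - F Vy)) / 2|
              = |(f y - g y) * ((F Ux - F Uy) + (F Vx - F Vy))| / 2 := by
            rw [abs_div, abs_two]
          have a3 : |((f x + g x) - (f y + g y)) * (F Ux - F Vx) / 2|
              = |((f x + g x) - (f y + g y)) * (F Ux - F Vx)| / 2 := by
            rw [abs_div, abs_two]
          have a4 : |(f y + g y) * (F Ux - F Vx - (F Uy - F Vy)) / 2|
              = |(f y + g y) * (F Ux - F Vx - (F Uy - F Vy))| / 2 := by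
            rw [abs_div, abs_two]
          rw [a1, a2, a3, a4]
          rw [abs_mul] at t1'
          linarith
      _ = ((A0 + 2 * M * (cf + cg) + (L : ℝ) / 4 * CK * (cf + cg) * I) * δ) * r := by
          ring
  -- combine
  calc cNorm γ (fun x => f x * F (∫ z, K (x - z) * f z)
          - g x * F (∫ z, K (x - z) * g z))
      ≤ (A0 + M * (cf + cg)) * δ
        + (A0 + 2 * M * (cf + cg) + (L : ℝ) / 4 * CK * (cf + cg) * I) * δ :=
        cNorm_le (by positivity) (by positivity) hsup hdiff
    _ ≤ (2 * A0 + 3 * M + (L : ℝ) / 4 * CK + 1) * (1 + cf + cg) * (1 + I) * δ := by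
        rw [show (2 * A0 + 3 * M + (L : ℝ) / 4 * CK + 1) * (1 + cf + cg) * (1 + I) * δ
          = ((2 * A0 + 3 * M + (L : ℝ) / 4 * CK + 1) * ((1 + cf + cg) * (1 + I))) * δ
          from by ring]
        rw [show (A0 + M * (cf + cg)) * δ
          + (A0 + 2 * M * (cf + cg) + (L : ℝ) / 4 * CK * (cf + cg) * I) * δ
          = (2 * A0 + 3 * M * (cf + cg) + (L : ℝ) / 4 * CK * (cf + cg) * I) * δ
          from by ring]
        apply mul_le_mul_of_nonneg_right _ hδ0
        nlinarith [mul_nonneg hcf0 hI0, mul_nonneg hcg0 hI0,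
          mul_nonneg hA00 hI0, mul_nonneg hA00 (add_nonneg hcf0 hcg0),
          mul_nonneg (mul_nonneg hA00 (add_nonneg hcf0 hcg0)) hI0,
          mul_nonneg hM0 hI0, mul_nonneg (mul_nonneg hM0 (add_nonneg hcf0 hcg0)) hI0,
          mul_nonneg hM0 (add_nonneg hcf0 hcg0),
          mul_nonneg (mul_nonneg hL0 hCK0) hI0,
          mul_nonneg (mul_nonneg hL0 hCK0) (add_nonneg hcf0 hcg0),
          mul_nonneg hI0 (add_nonneg hcf0 hcg0),
          mul_nonneg (mul_nonneg hL0 hCK0) (mul_nonneg hI0 (add_nonneg hcf0 hcg0))]
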